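/- Let n ≥ 1, X ∈ ℝ^{n×d}, β, W ∈ ℝ^{d×d} and ρ ≥ 0, and let f(B) = (1/(2n))‖X − XB‖_F² + tr(β(B − W)ᵀ) + (ρ/2)‖B − W‖_F². Fix B ∈ ℝ^{d×d} and indices i, j ∈ {1,…,d}, and let E_{i,j} be the matrix with 1 in entry (i,j) and 0 elsewhere. Then the function φ(u) = f(B + u·E_{i,j}) on ℝ is twice differentiable and its second derivative is constant, equal to (1/n)·(XᵀX)_{i,i} + ρ for every u ∈ ℝ; in particular this coordinate-wise smoothness constant does not depend on B, on u, or on the index j. -/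

import Mathlib

open Matrix

/-- Coordinate-wise smoothness of the local objective: the restriction
`φ(u) = f(B + u·E_{i,j})` of the local smooth objective along coordinate `(i,j)` is twice
differentiable, with constant second derivative `(1/n)(XᵀX)_{i,i} + ρ`, independent of
`B`, `u` and `j`. -/
theorem coordinatewise_smoothness_constant {n d : ℕ} (hn : 1 ≤ n)
    (X : Matrix (Fin n) (Fin d) ℝ) (β W : Matrix (Fin d) (Fin d) ℝ)
    (ρ : ℝ) (hρ : 0 ≤ ρ) (B : Matrix (Fin d) (Fin d) ℝ) (i j : Fin d) :
    let f : Matrix (Fin d) (Fin d) ℝ → ℝ := fun M =>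
      (1 / (2 * (n : ℝ))) * ∑ a, ∑ b, ((X - X * M) a b) ^ 2
        + (β * (M - W)ᵀ).trace
        + (ρ / 2) * ∑ a, ∑ b, ((M - W) a b) ^ 2
    let φ : ℝ → ℝ := fun u => f (B + u • Matrix.single i j (1 : ℝ))
    ∃ g : ℝ → ℝ, (∀ u : ℝ, HasDerivAt φ (g u) u) ∧
      ∀ u : ℝ, HasDerivAt g ((1 / (n : ℝ)) * (Xᵀ * X) i i + ρ) u := by
  intro f φ
  have hn0 : (n : ℝ) ≠ 0 := Nat.cast_ne_zero.mpr (by omega)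
  set E : Matrix (Fin d) (Fin d) ℝ := Matrix.single i j (1 : ℝ) with hE
  set c : ℝ := (1 / (2 * (n : ℝ))) * (∑ a, (X a i) ^ 2) + ρ / 2 with hc
  set L : ℝ := -((1 / (n : ℝ)) * ∑ a, (X - X * B) a j * X a i) + β i j
      + ρ * ((B - W) i j) with hL
  set K : ℝ := (1 / (2 * (n : ℝ))) * (∑ a, ∑ b, ((X - X * B) a b) ^ 2)
      + (β * (B - W)ᵀ).trace + (ρ / 2) * (∑ a, ∑ b, ((B - W) a b) ^ 2) with hK
  have e1 : ∀ (u : ℝ) (a : Fin n) (b : Fin d),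
      (X - X * (B + u • E)) a b = (X - X * B) a b - u * (if b = j then X a i else 0) := by
    intro u a b
    simp [hE, Matrix.sub_apply, Matrix.mul_apply, Matrix.add_apply, Matrix.smul_apply,
      Matrix.single, Matrix.of_apply, mul_ite, mul_add, Finset.sum_add_distrib,
      Finset.mul_sum, ite_and, Finset.sum_ite_eq, eq_comm]
    split <;> ring
  have h1 : ∀ u : ℝ, (∑ a, ∑ b, ((X - X * (B + u • E)) a b) ^ 2)
      = (∑ a, ∑ b, ((X - X * B) a b) ^ 2)
        - 2 * u * (∑ a, (X - X * B) a j * X a i) + u ^ 2 * ∑ a, (X a i) ^ 2 := by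
    intro u
    have key : ∀ (a : Fin n) (b : Fin d),
        ((X - X * B) a b - u * (if b = j then X a i else 0)) ^ 2
          = ((X - X * B) a b) ^ 2
            - 2 * u * (if b = j then (X - X * B) a b * X a i else 0)
            + u ^ 2 * (if b = j then (X a i) ^ 2 else 0) := by
      intro a b; split <;> ring
    simp only [e1, key, Finset.sum_add_distrib, Finset.sum_sub_distrib,
      Finset.sum_ite_eq', Finset.mem_univ, if_true, ← Finset.mul_sum]
  have h2 : ∀ u : ℝ, (β * ((B + u • E) - W)ᵀ).trace
      = (β * (B - W)ᵀ).trace + u * β i j := by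
    intro u
    have hsplit : (B + u • E) - W = (B - W) + u • E := by abel
    have htr : (β * Eᵀ).trace = β i j := by
      simp [hE, Matrix.trace, Matrix.diag, Matrix.mul_apply, Matrix.transpose_apply,
        Matrix.single, Matrix.of_apply, ite_and, mul_ite,
        Finset.sum_ite_eq, Finset.sum_ite_eq']
    rw [hsplit, Matrix.transpose_add, Matrix.mul_add, Matrix.trace_add,
      Matrix.transpose_smul, Matrix.mul_smul, Matrix.trace_smul, htr]
    simp
  have h3 : ∀ u : ℝ, (∑ a, ∑ b, (((B + u • E) - W) a b) ^ 2)
      = (∑ a, ∑ b, ((B - W) a b) ^ 2) + 2 * u * ((B - W) i j) + u ^ 2 := by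
    intro u
    have e3 : ∀ (a b : Fin d), ((B + u • E) - W) a b
        = (B - W) a b + u * (if i = a ∧ j = b then 1 else 0) := by
      intro a b
      simp [hE, Matrix.sub_apply, Matrix.add_apply, Matrix.smul_apply,
        Matrix.single, Matrix.of_apply]
      split <;> ring
    have key : ∀ (a b : Fin d),
        ((B - W) a b + u * (if i = a ∧ j = b then 1 else 0)) ^ 2
          = ((B - W) a b) ^ 2
            + 2 * u * (if i = a then (if j = b then (B - W) a b else 0) else 0)
            + u ^ 2 * (if i = a then (if j = b then 1 else 0) else 0) := by
      intro a b
      by_cases h : i = a <;> by_cases h' : j = b <;> simp [h, h'] <;> ring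
    have hsum : ∀ (F : Fin d → Fin d → ℝ),
        (∑ a, ∑ b, if i = a then (if j = b then F a b else 0) else 0) = F i j := by
      intro F
      have hrow : ∀ a : Fin d, (∑ b, if i = a then (if j = b then F a b else 0) else 0)
          = if i = a then F a j else 0 := by
        intro a; split <;> simp [Finset.sum_ite_eq]
      simp [hrow, Finset.sum_ite_eq]
    simp only [e3, key, Finset.sum_add_distrib, ← Finset.mul_sum, hsum]
    rw [hsum (B - W)]
    ring
  have hφ : ∀ u : ℝ, φ u = c * u ^ 2 + L * u + K := by
    intro u
    show f (B + u • E) = _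
    simp only [f, h1 u, h2 u, h3 u, hc, hL, hK]
    field_simp
    ring
  refine ⟨fun u => 2 * c * u + L, ?_, ?_⟩
  · intro u
    have hfun : φ = fun x => c * x ^ 2 + L * x + K := funext hφ
    rw [hfun]
    have h := (((hasDerivAt_pow 2 u).const_mul c).add
      ((hasDerivAt_id u).const_mul L)).add_const K
    refine h.congr_deriv ?_
    push_cast
    ring
  · intro u
    have h := ((hasDerivAt_id u).const_mul (2 * c)).add_const L
    have hval : (1 / (n : ℝ)) * (Xᵀ * X) i i + ρ = 2 * c := by
      have hXX : (Xᵀ * X) i i = ∑ a, (X a i) ^ 2 := by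
        simp [Matrix.mul_apply, Matrix.transpose_apply, sq]
      rw [hXX, hc]
      field_simp
    rw [hval]
    refine h.congr_deriv ?_
    ring
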